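/- If m = p^u and n = q^v with p, q primes and gcd(m, r^k − 1) = 1 for all 1 ≤ k < n, then the normal subgroups of ZM(m,n,r) form a chain of length u + v: ⟨1⟩ ⊂ ⟨a^{p^{u-1}}⟩ ⊂ ... ⊂ ⟨a⟩ ⊂ ⟨a, b^{q^{v-1}}⟩ ⊂ ... ⊂ ⟨a, b⟩ = ZM(m,n,r); in particular ZM(m,n,r) has exactly u + v + 1 normal subgroups. -/

import Mathlib

set_option linter.unusedSectionVars false

def ZMrels (m n : ℕ) (r : ℤ) : Set (FreeGroup Bool) :=
  {FreeGroup.of true ^ m, FreeGroup.of false ^ n,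
   (FreeGroup.of false)⁻¹ * FreeGroup.of true * FreeGroup.of false * (FreeGroup.of true) ^ (-r)}

abbrev ZM (m n : ℕ) (r : ℤ) : Type := PresentedGroup (ZMrels m n r)

def ZMa (m n : ℕ) (r : ℤ) : ZM m n r := PresentedGroup.of true

def ZMb (m n : ℕ) (r : ℤ) : ZM m n r := PresentedGroup.of false
open AddSubgroup

section ZModFacts
-- y is a multiple of x if gcd(N,x.val) divides y.val
lemma zmod_mul_of_gcd_dvd {N : ℕ} [NeZero N] (x y : ZMod N)
    (h : Nat.gcd N x.val ∣ y.val) : ∃ z : ZMod N, y = z * x := by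
  set g := Nat.gcd N x.val with hg
  have hbez : (g : ℤ) = N * Nat.gcdA N x.val + x.val * Nat.gcdB N x.val := Nat.gcd_eq_gcd_ab _ _
  have hcast : ((g : ℤ) : ZMod N) = ((Nat.gcdB N x.val : ZMod N)) * x := by
    push_cast [hbez]
    simp [ZMod.natCast_self, ZMod.natCast_val, ZMod.cast_id]
    ring
  obtain ⟨d, hd⟩ := h
  refine ⟨(d : ZMod N) * (Nat.gcdB N x.val : ZMod N), ?_⟩
  have : y = ((y.val : ℕ) : ZMod N) := by simp [ZMod.natCast_val, ZMod.cast_id]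
  rw [this, hd]
  push_cast
  rw [mul_comm (g : ZMod N) (d : ZMod N), mul_assoc]
  congr 1
  exact_mod_cast hcast

-- comparability of elements in ZMod (p^u)
lemma zmod_comparable {p u : ℕ} (hp : p.Prime) (x y : ZMod (p ^ u)) :
    (∃ z, y = z * x) ∨ (∃ z, x = z * y) := by
  haveI : NeZero (p ^ u) := ⟨pow_ne_zero _ hp.pos.ne'⟩
  have hx : Nat.gcd (p ^ u) x.val ∣ p ^ u := Nat.gcd_dvd_left _ _
  have hy : Nat.gcd (p ^ u) y.val ∣ p ^ u := Nat.gcd_dvd_left _ _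
  obtain ⟨i, hi, hix⟩ := (Nat.dvd_prime_pow hp).1 hx
  obtain ⟨j, hj, hjy⟩ := (Nat.dvd_prime_pow hp).1 hy
  rcases le_total i j with hij | hij
  · left
    refine zmod_mul_of_gcd_dvd x y ?_
    calc Nat.gcd (p ^ u) x.val = p ^ i := hix
    _ ∣ p ^ j := pow_dvd_pow p hij
    _ = Nat.gcd (p ^ u) y.val := hjy.symm
    _ ∣ y.val := Nat.gcd_dvd_right _ _
  · right
    refine zmod_mul_of_gcd_dvd y x ?_
    calc Nat.gcd (p ^ u) y.val = p ^ j := hjy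
    _ ∣ p ^ i := pow_dvd_pow p hij
    _ = Nat.gcd (p ^ u) x.val := hix.symm
    _ ∣ x.val := Nat.gcd_dvd_right _ _

lemma zmod_mem_of_mul {N : ℕ} (H : AddSubgroup (ZMod N)) {x : ZMod N} (hx : x ∈ H)
    (z : ZMod N) : z * x ∈ H := by
  by_cases hN : N = 0
  · subst hN
    -- ZMod 0 = ℤ
    exact H.zsmul_mem hx z
  · haveI : NeZero N := ⟨hN⟩
    have : z * x = z.val • x := by rw [nsmul_eq_mul]; simp [ZMod.natCast_val, ZMod.cast_id]
    rw [this]; exact H.nsmul_mem hx z.val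

lemma zmod_chain {p u : ℕ} (hp : p.Prime) (H K : AddSubgroup (ZMod (p ^ u))) :
    H ≤ K ∨ K ≤ H := by
  by_cases h : H ≤ K
  · exact Or.inl h
  · right
    rw [SetLike.not_le_iff_exists] at h
    obtain ⟨x, hxH, hxK⟩ := h
    intro y hy
    rcases zmod_comparable hp x y with ⟨z, hz⟩ | ⟨z, hz⟩
    · exact hz ▸ zmod_mem_of_mul H hxH z
    · exact absurd (hz ▸ zmod_mem_of_mul K hy z) hxK
end ZModFacts

section Part2
variable {p u : ℕ}

-- every AddSubgroup of ZMod (p^u) is zmultiples of p^i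
lemma zmod_addSubgroup_eq (hp : p.Prime) (H : AddSubgroup (ZMod (p ^ u))) :
    ∃ i ≤ u, H = zmultiples ((p ^ i : ℕ) : ZMod (p ^ u)) := by
  haveI : NeZero (p ^ u) := ⟨pow_ne_zero _ hp.pos.ne'⟩
  have hNpos : 0 < p ^ u := Nat.pos_of_ne_zero (NeZero.ne _)
  set S : Set ℕ := {g | ∃ x ∈ H, Nat.gcd (p ^ u) x.val = g} with hS
  have hSne : S.Nonempty := ⟨Nat.gcd (p ^ u) ((0 : ZMod (p^u)).val), 0, H.zero_mem, rfl⟩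
  set g0 := sInf S with hg0
  obtain ⟨x0, hx0H, hx0⟩ : g0 ∈ S := Nat.sInf_mem hSne
  have hg0N : g0 ∣ p ^ u := hx0 ▸ Nat.gcd_dvd_left _ _
  obtain ⟨i, hiu, hig⟩ := (Nat.dvd_prime_pow hp).1 hg0N
  have hvaldvd : g0 ∣ ((g0 : ℕ) : ZMod (p ^ u)).val := by
    rw [ZMod.val_natCast]
    exact (Nat.dvd_mod_iff hg0N).2 dvd_rfl
  have hgcdval : Nat.gcd (p ^ u) ((g0 : ℕ) : ZMod (p ^ u)).val = g0 := by
    rw [ZMod.val_natCast, Nat.gcd_comm, ← Nat.gcd_rec, Nat.gcd_eq_right hg0N]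
  refine ⟨i, hiu, le_antisymm ?_ ?_⟩
  · -- H ≤ zmultiples
    intro y hy
    have hgyS : Nat.gcd (p ^ u) y.val ∈ S := ⟨y, hy, rfl⟩
    have hle : g0 ≤ Nat.gcd (p ^ u) y.val := Nat.sInf_le hgyS
    obtain ⟨j, hju, hjg⟩ := (Nat.dvd_prime_pow hp).1 (Nat.gcd_dvd_left (p ^ u) y.val)
    have hdvd : g0 ∣ y.val := by
      have hij : i ≤ j := by
        rw [hig] at hle; rw [hjg] at hle
        exact (Nat.pow_le_pow_iff_right hp.one_lt).1 hle
      calc g0 = p ^ i := hig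
      _ ∣ p ^ j := pow_dvd_pow p hij
      _ = Nat.gcd (p ^ u) y.val := hjg.symm
      _ ∣ y.val := Nat.gcd_dvd_right _ _
    obtain ⟨z, hz⟩ := zmod_mul_of_gcd_dvd ((g0 : ℕ) : ZMod (p ^ u)) y (by rw [hgcdval]; exact hdvd)
    rw [← hig, hz]
    exact zmod_mem_of_mul _ (mem_zmultiples _) z
  · -- zmultiples ≤ H
    rw [← hig]
    rw [zmultiples_le]
    obtain ⟨z, hz⟩ := zmod_mul_of_gcd_dvd x0 ((g0 : ℕ) : ZMod (p ^ u)) (hx0 ▸ hvaldvd)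
    exact hz ▸ zmod_mem_of_mul H hx0H z

lemma zmod_zmultiples_card (hp : p.Prime) {i : ℕ} (hiu : i ≤ u) :
    Nat.card (zmultiples ((p ^ i : ℕ) : ZMod (p ^ u))) = p ^ (u - i) := by
  rw [Nat.card_zmultiples, ZMod.addOrderOf_coe _ (pow_ne_zero _ hp.pos.ne'),
    Nat.gcd_eq_right (pow_dvd_pow p hiu), Nat.pow_div hiu hp.pos]

lemma zmod_zmultiples_inj (hp : p.Prime) {i j : ℕ} (hiu : i ≤ u) (hju : j ≤ u)
    (h : zmultiples ((p ^ i : ℕ) : ZMod (p ^ u)) = zmultiples ((p ^ j : ℕ) : ZMod (p ^ u))) :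
    i = j := by
  have := (zmod_zmultiples_card hp hiu).symm.trans (h ▸ zmod_zmultiples_card hp hju)
  have huij : u - i = u - j := Nat.pow_right_injective hp.two_le this
  omega
end Part2

open Multiplicative SemidirectProduct

section Gdef
variable (m n : ℕ)

def chi (c : (ZMod m)ˣ) (hc : c ^ n = 1) : Multiplicative (ZMod n) →* (ZMod m)ˣ :=
  AddMonoidHom.toMultiplicativeLeft
    (ZMod.lift n ⟨zmultiplesHom (Additive (ZMod m)ˣ) (Additive.ofMul c), by
      show (n : ℤ) • Additive.ofMul c = 0
      have : ((n:ℤ) • Additive.ofMul c).toMul = c ^ (n:ℤ) := rfl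
      have h2 : c ^ (n:ℤ) = 1 := by rw [zpow_natCast, hc]
      apply Additive.toMul.injective
      rw [this, h2]; rfl⟩)

lemma chi_apply (c : (ZMod m)ˣ) (hc : c ^ n = 1) (z : ℤ) :
    chi m n c hc (ofAdd ((z : ℤ) : ZMod n)) = c ^ z := by
  unfold chi
  rw [AddMonoidHom.toMultiplicativeLeft_apply_apply]
  show Additive.toMul (ZMod.lift n _ ((z : ℤ) : ZMod n)) = c ^ z
  rw [ZMod.lift_coe]
  rfl

def autHom : (ZMod m)ˣ →* MulAut (Multiplicative (ZMod m)) where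
  toFun z := AddEquiv.toMultiplicative (AddAut.mulLeft z)
  map_one' := by
    apply MulEquiv.ext; intro x
    show ofAdd ((1 : (ZMod m)ˣ) • x.toAdd) = x
    simp
  map_mul' a b := by
    apply MulEquiv.ext; intro x
    show ofAdd ((a * b : (ZMod m)ˣ) • x.toAdd) = ofAdd (a • (b • x.toAdd : ZMod m))
    rw [mul_smul]

def phiH (c : (ZMod m)ˣ) (hc : c ^ n = 1) :
    Multiplicative (ZMod n) →* MulAut (Multiplicative (ZMod m)) :=
  (autHom m).comp (chi m n c hc)

lemma phiH_apply (c : (ZMod m)ˣ) (hc : c ^ n = 1) (g : Multiplicative (ZMod n)) (y : ZMod m) :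
    phiH m n c hc g (ofAdd y) = ofAdd ((chi m n c hc g : ZMod m) * y) := rfl

abbrev Gd (c : (ZMod m)ˣ) (hc : c ^ n = 1) : Type :=
  (Multiplicative (ZMod m)) ⋊[phiH m n c hc] (Multiplicative (ZMod n))
end Gdef

section Part4
variable (m n : ℕ) (c : (ZMod m)ˣ) (hc : c ^ n = 1)

local notation "G" => Gd m n c hc
local notation "A" => MonoidHom.ker (rightHom : Gd m n c hc →* Multiplicative (ZMod n))

lemma mem_A_iff (x : G) : x ∈ A ↔ x.right = 1 := Iff.rfl

lemma eq_inl_of_mem_A {x : G} (hx : x ∈ A) : x = inl x.left := by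
  conv_lhs => rw [← inl_left_mul_inr_right x]
  rw [(mem_A_iff m n c hc x).1 hx, map_one, mul_one]

lemma conj_inl (g : G) (y : Multiplicative (ZMod m)) :
    g * inl y * g⁻¹ = inl (phiH m n c hc g.right y) := by
  conv_lhs => rw [← inl_left_mul_inr_right g]
  calc inl g.left * inr g.right * inl y * (inl g.left * inr g.right)⁻¹
      = inl g.left * (inr g.right * inl y * inr g.right⁻¹) * (inl g.left)⁻¹ := by
        rw [map_inv]; group
    _ = inl g.left * inl (phiH m n c hc g.right y) * (inl g.left)⁻¹ := by rw [← inl_aut]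
    _ = inl (g.left * phiH m n c hc g.right y * g.left⁻¹) := by rw [map_mul, map_mul, map_inv]
    _ = inl (phiH m n c hc g.right y) := by
        rw [mul_comm g.left, mul_assoc, mul_inv_cancel, mul_one]

lemma normal_of_le_A {H : Subgroup G} (hH : H ≤ A) : H.Normal := by
  constructor
  intro x hx g
  have hxA := eq_inl_of_mem_A m n c hc (hH hx)
  rw [hxA] at hx ⊢
  rw [conj_inl]
  have h2 : phiH m n c hc g.right x.left
      = ofAdd ((chi m n c hc g.right : ZMod m) * x.left.toAdd) := rfl
  rw [h2]
  have hmem : x.left ∈ Subgroup.comap (inl : Multiplicative (ZMod m) →* G) H := hx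
  have : (chi m n c hc g.right : ZMod m) * x.left.toAdd ∈
      Subgroup.toAddSubgroup' (Subgroup.comap (inl : Multiplicative (ZMod m) →* G) H) :=
    zmod_mem_of_mul _ hmem _
  exact this

lemma normal_of_ge_A {H : Subgroup G} (hH : A ≤ H) : H.Normal := by
  have : H = Subgroup.comap rightHom (Subgroup.map rightHom H) := by
    rw [Subgroup.comap_map_eq, sup_of_le_left hH]
  rw [this]
  exact Subgroup.Normal.comap inferInstance _

lemma dichotomy [NeZero m] (hunit : ∀ x : Multiplicative (ZMod n), x ≠ 1 →
      IsUnit ((chi m n c hc x : ZMod m) - 1))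
    {N : Subgroup G} (hN : N.Normal) : N ≤ A ∨ A ≤ N := by
  by_cases h : N ≤ A
  · exact Or.inl h
  right
  rw [SetLike.not_le_iff_exists] at h
  obtain ⟨x, hxN, hxA⟩ := h
  have hxr : x.right ≠ 1 := fun h => hxA ((mem_A_iff m n c hc x).2 h)
  set e : ZMod m := (chi m n c hc x.right : ZMod m) with he
  obtain ⟨U, hU⟩ := hunit x.right hxr
  have key : inl (ofAdd (e - 1)) ∈ N := by
    have h1 : (inl (ofAdd (1 : ZMod m)) : G) * x⁻¹ * (inl (ofAdd (1 : ZMod m)))⁻¹ ∈ N :=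
      hN.conj_mem _ (N.inv_mem hxN) _
    have h2 : x * ((inl (ofAdd (1 : ZMod m)) : G) * x⁻¹ * (inl (ofAdd (1 : ZMod m)))⁻¹) ∈ N :=
      N.mul_mem hxN h1
    have h3 : x * ((inl (ofAdd (1 : ZMod m)) : G) * x⁻¹ * (inl (ofAdd (1 : ZMod m)))⁻¹)
        = (x * (inl (ofAdd (1 : ZMod m)) : G) * x⁻¹) * (inl (ofAdd (1 : ZMod m)))⁻¹ := by group
    rw [h3, conj_inl] at h2
    have h4 : phiH m n c hc x.right (ofAdd (1 : ZMod m)) = ofAdd e := by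
      rw [phiH_apply, mul_one]
    rw [h4] at h2
    have h5 : (inl (ofAdd e) : G) * (inl (ofAdd (1 : ZMod m)))⁻¹ = inl (ofAdd (e - 1)) := by
      rw [← map_inv, ← map_mul]
      congr 1
      rw [← ofAdd_neg, ← ofAdd_add]
      congr 1
      ring
    rw [h5] at h2
    exact h2
  intro z hz
  rw [eq_inl_of_mem_A m n c hc hz]
  set w : ZMod m := z.left.toAdd with hw
  have hzl : z.left = ofAdd w := rfl
  rw [hzl]
  have hpow : ∀ k : ℕ, (inl (ofAdd (e - 1)) : G) ^ k = inl (ofAdd (k • (e - 1))) := by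
    intro k
    rw [← map_pow]
    congr 1
  have hk : (((w * ((U⁻¹ : (ZMod m)ˣ) : ZMod m)).val : ℕ) : ZMod m) * (e - 1) = w := by
    have hval : (((w * ((U⁻¹ : (ZMod m)ˣ) : ZMod m)).val : ℕ) : ZMod m)
        = w * ((U⁻¹ : (ZMod m)ˣ) : ZMod m) := by
      rw [ZMod.natCast_val, ZMod.cast_id]
    rw [hval, ← hU, mul_assoc, Units.inv_mul, mul_one]
  have := N.pow_mem key ((w * ((U⁻¹ : (ZMod m)ˣ) : ZMod m)).val)
  rw [hpow] at this
  have harg : ((w * ((U⁻¹ : (ZMod m)ˣ) : ZMod m)).val) • (e - 1) = w := by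
    rw [nsmul_eq_mul]; exact hk
  rwa [harg] at this

def equivBelow : {H : Subgroup G // H ≤ A} ≃ AddSubgroup (ZMod m) where
  toFun H := Subgroup.toAddSubgroup' (Subgroup.comap (inl : Multiplicative (ZMod m) →* G) H.1)
  invFun X := ⟨Subgroup.map inl (AddSubgroup.toSubgroup X), by
    rw [← range_inl_eq_ker_rightHom]
    exact Subgroup.map_le_range _ _⟩
  left_inv H := by
    apply Subtype.ext
    show Subgroup.map inl (AddSubgroup.toSubgroup (Subgroup.toAddSubgroup' _)) = H.1
    rw [OrderIso.apply_symm_apply]  -- toSubgroup (toAddSubgroup' S) = S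
    rw [Subgroup.map_comap_eq, range_inl_eq_ker_rightHom, inf_eq_right.2 H.2]
  right_inv X := by
    show Subgroup.toAddSubgroup' (Subgroup.comap inl (Subgroup.map inl (AddSubgroup.toSubgroup X))) = X
    rw [Subgroup.comap_map_eq_self_of_injective inl_injective]
    exact AddSubgroup.toSubgroup.symm_apply_apply X

def equivAbove : {H : Subgroup G // A ≤ H} ≃ AddSubgroup (ZMod n) where
  toFun H := Subgroup.toAddSubgroup'
    (Subgroup.map (rightHom : G →* Multiplicative (ZMod n)) H.1)
  invFun X := ⟨Subgroup.comap rightHom (AddSubgroup.toSubgroup X), by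
    intro x hx
    rw [Subgroup.mem_comap, (show (rightHom x : Multiplicative (ZMod n)) = 1 from hx)]
    exact one_mem _⟩
  left_inv H := by
    apply Subtype.ext
    show Subgroup.comap rightHom (AddSubgroup.toSubgroup (Subgroup.toAddSubgroup' _)) = H.1
    rw [OrderIso.apply_symm_apply, Subgroup.comap_map_eq, sup_of_le_left H.2]
  right_inv X := by
    show Subgroup.toAddSubgroup'
      (Subgroup.map rightHom (Subgroup.comap rightHom (AddSubgroup.toSubgroup X))) = X
    rw [Subgroup.map_comap_eq_self_of_surjective rightHom_surjective]
    exact AddSubgroup.toSubgroup.symm_apply_apply X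

lemma chain_normal [NeZero m] (hunit : ∀ x : Multiplicative (ZMod n), x ≠ 1 →
      IsUnit ((chi m n c hc x : ZMod m) - 1))
    (hcm : ∀ H K : AddSubgroup (ZMod m), H ≤ K ∨ K ≤ H)
    (hcn : ∀ H K : AddSubgroup (ZMod n), H ≤ K ∨ K ≤ H) :
    ∀ N K : Subgroup G, N.Normal → K.Normal → N ≤ K ∨ K ≤ N := by
  intro N K hN hK
  have hrecover : ∀ L : Subgroup G, L ≤ A →
      L = Subgroup.map inl (Subgroup.comap (inl : Multiplicative (ZMod m) →* G) L) := by
    intro L hL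
    rw [Subgroup.map_comap_eq, range_inl_eq_ker_rightHom, inf_eq_right.2 hL]
  have hrecover2 : ∀ L : Subgroup G, A ≤ L →
      L = Subgroup.comap (rightHom : G →* Multiplicative (ZMod n)) (Subgroup.map rightHom L) := by
    intro L hL
    rw [Subgroup.comap_map_eq, sup_of_le_left hL]
  rcases dichotomy m n c hc hunit hN with h1 | h1 <;>
    rcases dichotomy m n c hc hunit hK with h2 | h2
  · -- both below A
    rcases hcm (Subgroup.toAddSubgroup' (Subgroup.comap (inl : Multiplicative (ZMod m) →* G) N))
      (Subgroup.toAddSubgroup' (Subgroup.comap (inl : Multiplicative (ZMod m) →* G) K)) with h | h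
    · left
      rw [hrecover N h1, hrecover K h2]
      exact Subgroup.map_mono (Subgroup.toAddSubgroup'.le_iff_le.1 h)
    · right
      rw [hrecover N h1, hrecover K h2]
      exact Subgroup.map_mono (Subgroup.toAddSubgroup'.le_iff_le.1 h)
  · exact Or.inl (le_trans h1 h2)
  · exact Or.inr (le_trans h2 h1)
  · rcases hcn (Subgroup.toAddSubgroup' (Subgroup.map (rightHom : G →* Multiplicative (ZMod n)) N))
      (Subgroup.toAddSubgroup' (Subgroup.map (rightHom : G →* Multiplicative (ZMod n)) K)) with h | h
    · left
      rw [hrecover2 N h1, hrecover2 K h2]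
      exact Subgroup.comap_mono (Subgroup.toAddSubgroup'.le_iff_le.1 h)
    · right
      rw [hrecover2 N h1, hrecover2 K h2]
      exact Subgroup.comap_mono (Subgroup.toAddSubgroup'.le_iff_le.1 h)

lemma finiteG [NeZero m] [NeZero n] : Finite G := by
  apply Finite.of_injective (fun x : G => (x.left, x.right))
  intro a b h
  obtain ⟨h1, h2⟩ := Prod.mk.injEq .. ▸ h
  ext <;> simp_all

lemma card_normal [NeZero m] [NeZero n]
    (hunit : ∀ x : Multiplicative (ZMod n), x ≠ 1 →
      IsUnit ((chi m n c hc x : ZMod m) - 1)) :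
    Nat.card {H : Subgroup G // H.Normal}
      = Nat.card (AddSubgroup (ZMod m)) + Nat.card (AddSubgroup (ZMod n)) - 1 := by
  haveI : Finite G := finiteG m n c hc
  have hset : {H : Subgroup G | H.Normal} = {H | H ≤ A} ∪ {H | A ≤ H} := by
    ext H
    constructor
    · intro hH
      exact dichotomy m n c hc hunit hH
    · rintro (h | h)
      · exact normal_of_le_A m n c hc h
      · exact normal_of_ge_A m n c hc h
  have hinter : {H : Subgroup G | H ≤ A} ∩ {H | A ≤ H} = {A} := by
    ext H
    simp only [Set.mem_inter_iff, Set.mem_setOf_eq, Set.mem_singleton_iff]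
    constructor
    · rintro ⟨h1, h2⟩; exact le_antisymm h1 h2
    · rintro rfl; exact ⟨le_rfl, le_rfl⟩
  have hfin1 : {H : Subgroup G | H ≤ A}.Finite := Set.toFinite _
  have hfin2 : {H : Subgroup G | A ≤ H}.Finite := Set.toFinite _
  have hcard1 : Nat.card {H : Subgroup G | H ≤ A} = Nat.card (AddSubgroup (ZMod m)) :=
    Nat.card_congr (equivBelow m n c hc)
  have hcard2 : Nat.card {H : Subgroup G | A ≤ H} = Nat.card (AddSubgroup (ZMod n)) :=
    Nat.card_congr (equivAbove m n c hc)
  have hmain : Nat.card {H : Subgroup G // H.Normal}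
      = ({H : Subgroup G | H ≤ A} ∪ {H | A ≤ H}).ncard := by
    rw [← Nat.card_coe_set_eq, ← hset]
    rfl
  have hunion := Set.ncard_union_add_ncard_inter {H : Subgroup G | H ≤ A} {H | A ≤ H} hfin1 hfin2
  rw [hinter, Set.ncard_singleton] at hunion
  have e1 : ({H : Subgroup G | H ≤ A}).ncard = Nat.card (AddSubgroup (ZMod m)) := by
    rw [← Nat.card_coe_set_eq]; exact hcard1
  have e2 : ({H : Subgroup G | A ≤ H}).ncard = Nat.card (AddSubgroup (ZMod n)) := by
    rw [← Nat.card_coe_set_eq]; exact hcard2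
  rw [e1, e2] at hunion
  omega
end Part4

lemma card_addSubgroup_zmod {p u : ℕ} (hp : p.Prime) :
    Nat.card (AddSubgroup (ZMod (p ^ u))) = u + 1 := by
  have hbij : Function.Bijective
      (fun i : Fin (u + 1) => AddSubgroup.zmultiples ((p ^ (i : ℕ) : ℕ) : ZMod (p ^ u))) := by
    constructor
    · intro i j h
      exact Fin.ext (zmod_zmultiples_inj hp (Nat.lt_succ_iff.1 i.isLt) (Nat.lt_succ_iff.1 j.isLt) h)
    · intro H
      obtain ⟨i, hiu, hH⟩ := zmod_addSubgroup_eq hp H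
      exact ⟨⟨i, Nat.lt_succ_of_le hiu⟩, hH.symm⟩
  rw [← Nat.card_eq_of_bijective _ hbij, Nat.card_eq_fintype_card, Fintype.card_fin]

section Part5
variable (m n : ℕ) (r : ℤ)

/-- powers of r congruent mod m when exponents congruent mod n -/
lemma powCongr (hr : (m : ℤ) ∣ r ^ n - 1) {a b : ℕ} (hab : a % n = b % n) :
    (m : ℤ) ∣ r ^ a - r ^ b := by
  rcases le_total b a with h | h
  · have hn : n ∣ a - b := (Nat.modEq_iff_dvd' h).1 hab.symm
    obtain ⟨d, hd⟩ := hn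
    have : r ^ a - r ^ b = r ^ b * ((r ^ n) ^ d - 1) := by
      rw [← pow_mul, ← hd, mul_sub, mul_one, ← pow_add, Nat.add_sub_cancel' h]
    rw [this]
    exact Dvd.dvd.mul_left (dvd_trans hr (by
      have := sub_dvd_pow_sub_pow (r ^ n) 1 d
      simpa using this)) _
  · have hn : n ∣ b - a := (Nat.modEq_iff_dvd' h).1 hab
    obtain ⟨d, hd⟩ := hn
    have : r ^ b - r ^ a = r ^ a * ((r ^ n) ^ d - 1) := by
      rw [← pow_mul, ← hd, mul_sub, mul_one, ← pow_add, Nat.add_sub_cancel' h]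
    have h2 : (m : ℤ) ∣ r ^ b - r ^ a := by
      rw [this]
      exact Dvd.dvd.mul_left (dvd_trans hr (by
        have := sub_dvd_pow_sub_pow (r ^ n) 1 d
        simpa using this)) _
    have h3 := dvd_neg.2 h2
    rwa [neg_sub] at h3

lemma rn_one (hr : (m : ℤ) ∣ r ^ n - 1) : ((r : ZMod m)) ^ n = 1 := by
  have := (ZMod.intCast_zmod_eq_zero_iff_dvd (r ^ n - 1) m).2 hr
  push_cast at this
  linear_combination this

/-- the unit r mod m -/
def u0 (hn : 0 < n) (hr : (m : ℤ) ∣ r ^ n - 1) : (ZMod m)ˣ where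
  val := (r : ZMod m)
  inv := (r : ZMod m) ^ (n - 1)
  val_inv := by
    rw [← pow_succ', Nat.sub_add_cancel hn]
    exact rn_one m n r hr
  inv_val := by
    rw [← pow_succ, Nat.sub_add_cancel hn]
    exact rn_one m n r hr

lemma u0_pow_n (hn : 0 < n) (hr : (m : ℤ) ∣ r ^ n - 1) : (u0 m n r hn hr) ^ n = 1 := by
  ext
  push_cast
  exact rn_one m n r hr

/-- the acting unit: r⁻¹ -/
def cU (hn : 0 < n) (hr : (m : ℤ) ∣ r ^ n - 1) : (ZMod m)ˣ := (u0 m n r hn hr)⁻¹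

lemma cU_pow_n (hn : 0 < n) (hr : (m : ℤ) ∣ r ^ n - 1) : (cU m n r hn hr) ^ n = 1 := by
  rw [cU, inv_pow, u0_pow_n, inv_one]

lemma cU_eq_pow (hn : 0 < n) (hr : (m : ℤ) ∣ r ^ n - 1) :
    cU m n r hn hr = (u0 m n r hn hr) ^ (n - 1) := by
  rw [cU]
  apply inv_eq_of_mul_eq_one_right
  rw [← pow_succ', Nat.sub_add_cancel hn, u0_pow_n]

lemma chi_cU_coe [NeZero n] (hn : 0 < n) (hr : (m : ℤ) ∣ r ^ n - 1) (x : ZMod n) :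
    ((chi m n (cU m n r hn hr) (cU_pow_n m n r hn hr) (Multiplicative.ofAdd x) : (ZMod m)ˣ) : ZMod m)
      = ((r ^ ((n - 1) * x.val) : ℤ) : ZMod m) := by
  have hx : x = (((x.val : ℕ) : ℤ) : ZMod n) := by
    rw [Int.cast_natCast, ZMod.natCast_val, ZMod.cast_id]
  have h1 : chi m n (cU m n r hn hr) (cU_pow_n m n r hn hr) (Multiplicative.ofAdd x)
      = (cU m n r hn hr) ^ ((x.val : ℕ) : ℤ) := by
    conv_lhs => rw [hx]
    exact chi_apply m n _ _ _
  rw [h1, cU_eq_pow, zpow_natCast, ← pow_mul]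
  push_cast [u0]
  rfl

lemma chi_unit_sub_one [NeZero n] (hn : 0 < n) (hr : (m : ℤ) ∣ r ^ n - 1)
    (hg : ∀ k : ℕ, 1 ≤ k → k < n → Int.gcd (m : ℤ) (r ^ k - 1) = 1) :
    ∀ x : Multiplicative (ZMod n), x ≠ 1 →
      IsUnit ((chi m n (cU m n r hn hr) (cU_pow_n m n r hn hr) x : ZMod m) - 1) := by
  intro x hx
  set y : ZMod n := x.toAdd with hy
  have hxy : x = Multiplicative.ofAdd y := rfl
  have hyne : y ≠ 0 := fun h => hx (by rw [hxy, h]; rfl)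
  set k : ℕ := y.val with hk
  have hk1 : 1 ≤ k := Nat.pos_of_ne_zero (fun h => hyne (by
    have := ZMod.natCast_val (R := ZMod n) y
    rw [← hk] at this
    rw [ZMod.cast_id] at this
    rw [← this, h, Nat.cast_zero]))
  have hkn : k < n := ZMod.val_lt y
  -- (n-1)*k ≡ n-k  [mod n]
  have hmod : ((n - 1) * k) % n = (n - k) % n := by
    have h1 : (n - 1) * k + k = n * k := by
      have : n - 1 + 1 = n := Nat.succ_pred_eq_of_pos hn
      calc (n - 1) * k + k = ((n - 1) + 1) * k := by ring
      _ = n * k := by rw [this]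
    have h2 : (n - k) + k = n := Nat.sub_add_cancel hkn.le
    have h3 : ((n - 1) * k + k) % n = ((n - k) + k) % n := by
      rw [h1, h2, Nat.mul_mod_right, Nat.mod_self]
    exact Nat.ModEq.add_right_cancel' k h3
  have hdvd : (m : ℤ) ∣ r ^ ((n - 1) * k) - r ^ (n - k) := powCongr m n r hr hmod
  have hnk1 : 1 ≤ n - k := by omega
  have hnkn : n - k < n := by omega
  have hgcd := hg (n - k) hnk1 hnkn
  obtain ⟨a, b, hab⟩ := Int.isCoprime_iff_gcd_eq_one.2 hgcd
  -- in ZMod m : b * (r^(n-k) - 1) = 1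
  have hb : ((b : ZMod m)) * ((r ^ (n - k) - 1 : ℤ) : ZMod m) = 1 := by
    have := congrArg (Int.cast : ℤ → ZMod m) hab
    push_cast at this
    rw [ZMod.natCast_self] at this
    simpa using (by linear_combination this : ((b : ZMod m)) * ((r:ZMod m) ^ (n - k) - 1) = 1)
  have heq : (chi m n (cU m n r hn hr) (cU_pow_n m n r hn hr) x : ZMod m) - 1
      = ((r ^ (n - k) - 1 : ℤ) : ZMod m) := by
    rw [hxy, chi_cU_coe m n r hn hr y, ← hk]
    have := (ZMod.intCast_zmod_eq_zero_iff_dvd _ m).2 hdvd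
    push_cast at this ⊢
    linear_combination this
  rw [heq]
  exact IsUnit.of_mul_eq_one _ (by rw [mul_comm]; exact hb)
end Part5

section Part6
variable (m n : ℕ) (r : ℤ) [NeZero m] [NeZero n]

-- helpers
lemma ofAdd_pow {M : Type*} [AddMonoid M] (a : M) (k : ℕ) :
    (Multiplicative.ofAdd a) ^ k = Multiplicative.ofAdd (k • a) := (ofAdd_nsmul k a).symm

lemma ofAdd_one_pow_val {k : ℕ} [NeZero k] (x : ZMod k) :
    (Multiplicative.ofAdd (1 : ZMod k)) ^ x.val = Multiplicative.ofAdd x := by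
  rw [ofAdd_pow]
  congr 1
  rw [nsmul_eq_mul, mul_one, ZMod.natCast_val, ZMod.cast_id]

lemma multZModExt {k : ℕ} [NeZero k] {H : Type*} [Monoid H]
    (f g : Multiplicative (ZMod k) →* H)
    (h : f (Multiplicative.ofAdd (1 : ZMod k)) = g (Multiplicative.ofAdd (1 : ZMod k))) :
    f = g := by
  refine MonoidHom.ext fun x => ?_
  have hx : x = (Multiplicative.ofAdd (1 : ZMod k)) ^ (x.toAdd.val) := by
    rw [ofAdd_one_pow_val]
    rfl
  rw [hx, map_pow, map_pow, h]

lemma zpow_congr_of_pow_eq_one {H : Type*} [Group H] {x : H} {k : ℕ} (hx : x ^ k = 1)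
    {s t : ℤ} (h : (k : ℤ) ∣ s - t) : x ^ s = x ^ t := by
  obtain ⟨d, hd⟩ := h
  have hs : s = t + k * d := by linarith [hd]
  rw [hs, zpow_add, zpow_mul, zpow_natCast, hx, one_zpow, mul_one]

variable (hn : 0 < n) (hr : (m : ℤ) ∣ r ^ n - 1)

local notation "CC" => cU m n r hn hr
local notation "hCC" => cU_pow_n m n r hn hr
local notation "GG" => Gd m n (cU m n r hn hr) (cU_pow_n m n r hn hr)

/-- generators in the semidirect product -/
def fgen : Bool → GG := fun b =>
  if b then inl (Multiplicative.ofAdd (1 : ZMod m)) else inr (Multiplicative.ofAdd (1 : ZMod n))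

lemma hrels : ∀ w ∈ ZMrels m n r, FreeGroup.lift (fgen m n r hn hr) w = 1 := by
  intro w hw
  have hfa : FreeGroup.lift (fgen m n r hn hr) (FreeGroup.of true)
      = inl (Multiplicative.ofAdd (1 : ZMod m)) := by rw [FreeGroup.lift_apply_of]; rfl
  have hfb : FreeGroup.lift (fgen m n r hn hr) (FreeGroup.of false)
      = inr (Multiplicative.ofAdd (1 : ZMod n)) := by rw [FreeGroup.lift_apply_of]; rfl
  simp only [ZMrels, Set.mem_insert_iff, Set.mem_singleton_iff] at hw
  rcases hw with rfl | rfl | rfl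
  · rw [map_pow, hfa, ← map_pow, ofAdd_pow]
    have : m • (1 : ZMod m) = 0 := by rw [nsmul_eq_mul, mul_one, ZMod.natCast_self]
    rw [this]
    exact map_one _
  · rw [map_pow, hfb, ← map_pow, ofAdd_pow]
    have : n • (1 : ZMod n) = 0 := by rw [nsmul_eq_mul, mul_one, ZMod.natCast_self]
    rw [this]
    exact map_one _
  · rw [map_mul, map_mul, map_mul, map_inv, map_zpow, hfa, hfb]
    have h1 : (inr (Multiplicative.ofAdd (1 : ZMod n)) : GG)⁻¹
          * inl (Multiplicative.ofAdd (1 : ZMod m))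
          * inr (Multiplicative.ofAdd (1 : ZMod n))
        = inl ((phiH m n CC hCC (Multiplicative.ofAdd (1 : ZMod n)))⁻¹
            (Multiplicative.ofAdd (1 : ZMod m))) := by
      rw [inl_aut_inv, map_inv]
    have h2 : ((phiH m n CC hCC (Multiplicative.ofAdd (1 : ZMod n)))⁻¹
            (Multiplicative.ofAdd (1 : ZMod m)))
        = Multiplicative.ofAdd ((r : ZMod m)) := by
      have hinv : (phiH m n CC hCC (Multiplicative.ofAdd (1 : ZMod n)))⁻¹
          = phiH m n CC hCC ((Multiplicative.ofAdd (1 : ZMod n))⁻¹) := by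
        rw [← map_inv]
      rw [hinv]
      have : ((Multiplicative.ofAdd (1 : ZMod n))⁻¹) = Multiplicative.ofAdd (-1 : ZMod n) := rfl
      rw [this, phiH_apply, mul_one]
      congr 1
      have hm1 : (-1 : ZMod n) = (((-1 : ℤ)) : ZMod n) := by push_cast; rfl
      rw [hm1, chi_apply]
      have : (CC) ^ (-1 : ℤ) = u0 m n r hn hr := by
        rw [cU, zpow_neg, zpow_one, inv_inv]
      rw [this]
      rfl
    have h3 : (inl (Multiplicative.ofAdd (1 : ZMod m)) : GG) ^ (-r)
        = inl (Multiplicative.ofAdd (-(r : ZMod m))) := by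
      rw [← map_zpow]
      congr 1
      have : (Multiplicative.ofAdd (1 : ZMod m)) ^ (-r)
          = Multiplicative.ofAdd ((-r) • (1 : ZMod m)) := (ofAdd_zsmul _ _).symm
      rw [this]
      congr 1
      rw [zsmul_eq_mul, mul_one]
      push_cast
      ring
    rw [h1, h2, h3, ← map_mul, ← ofAdd_add]
    have : (r : ZMod m) + (-(r : ZMod m)) = 0 := by ring
    rw [this]
    exact map_one _

def piHom : ZM m n r →* GG := PresentedGroup.toGroup (hrels m n r hn hr)

lemma piHom_a : piHom m n r hn hr (ZMa m n r) = inl (Multiplicative.ofAdd (1 : ZMod m)) := by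
  rw [piHom, ZMa, PresentedGroup.toGroup.of]; rfl

lemma piHom_b : piHom m n r hn hr (ZMb m n r) = inr (Multiplicative.ofAdd (1 : ZMod n)) := by
  rw [piHom, ZMb, PresentedGroup.toGroup.of]; rfl

-- relations inside ZM
lemma mk_rels_eq_one (w : FreeGroup Bool) (hw : w ∈ ZMrels m n r) :
    PresentedGroup.mk (ZMrels m n r) w = 1 :=
  (QuotientGroup.eq_one_iff _).2 (Subgroup.subset_normalClosure hw)

lemma aZ_pow : (ZMa m n r) ^ m = 1 := by
  have := mk_rels_eq_one m n r (FreeGroup.of true ^ m) (by simp [ZMrels])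
  rw [map_pow] at this
  exact this

lemma bZ_pow : (ZMb m n r) ^ n = 1 := by
  have := mk_rels_eq_one m n r (FreeGroup.of false ^ n) (by simp [ZMrels])
  rw [map_pow] at this
  exact this

lemma rel3 : (ZMb m n r)⁻¹ * ZMa m n r * ZMb m n r = (ZMa m n r) ^ (r : ℤ) := by
  have := mk_rels_eq_one m n r
    ((FreeGroup.of false)⁻¹ * FreeGroup.of true * FreeGroup.of false * (FreeGroup.of true) ^ (-r))
    (by simp [ZMrels])
  rw [map_mul, map_mul, map_mul, map_inv, map_zpow] at this
  have h2 : ((PresentedGroup.mk (ZMrels m n r)) (FreeGroup.of true)) ^ (-r)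
      = (((PresentedGroup.mk (ZMrels m n r)) (FreeGroup.of true)) ^ (r:ℤ))⁻¹ := by
    rw [← zpow_neg]
  rw [h2, mul_inv_eq_one] at this
  exact this

lemma conjZM_pow : ∀ j : ℕ,
    MulAut.conj ((ZMb m n r)⁻¹ ^ j) (ZMa m n r) = (ZMa m n r) ^ ((r ^ j : ℤ)) := by
  intro j
  induction j with
  | zero => simp
  | succ j ih =>
    rw [pow_succ, map_mul]
    show MulAut.conj ((ZMb m n r)⁻¹ ^ j) (MulAut.conj ((ZMb m n r)⁻¹) (ZMa m n r)) = _
    have hconj : MulAut.conj ((ZMb m n r)⁻¹) (ZMa m n r) = (ZMa m n r) ^ (r : ℤ) := by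
      rw [MulAut.conj_apply, inv_inv]
      exact rel3 m n r
    rw [hconj, map_zpow, ih, ← zpow_mul]
    congr 1
    ring

end Part6

section Part7
variable (m n : ℕ) (r : ℤ) [NeZero m] [NeZero n]
variable (hn : 0 < n) (hr : (m : ℤ) ∣ r ^ n - 1)

local notation "GG" => Gd m n (cU m n r hn hr) (cU_pow_n m n r hn hr)

def f1 : Multiplicative (ZMod m) →* ZM m n r :=
  AddMonoidHom.toMultiplicativeLeft
    (ZMod.lift m ⟨zmultiplesHom (Additive (ZM m n r)) (Additive.ofMul (ZMa m n r)), by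
      show (m : ℤ) • Additive.ofMul (ZMa m n r) = 0
      have : ((m : ℤ) • Additive.ofMul (ZMa m n r)).toMul = (ZMa m n r) ^ (m : ℤ) := rfl
      apply Additive.toMul.injective
      rw [this, zpow_natCast, aZ_pow]
      rfl⟩)

def f2 : Multiplicative (ZMod n) →* ZM m n r :=
  AddMonoidHom.toMultiplicativeLeft
    (ZMod.lift n ⟨zmultiplesHom (Additive (ZM m n r)) (Additive.ofMul (ZMb m n r)), by
      show (n : ℤ) • Additive.ofMul (ZMb m n r) = 0
      have : ((n : ℤ) • Additive.ofMul (ZMb m n r)).toMul = (ZMb m n r) ^ (n : ℤ) := rfl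
      apply Additive.toMul.injective
      rw [this, zpow_natCast, bZ_pow]
      rfl⟩)

lemma f1_coe (z : ℤ) :
    f1 m n r (Multiplicative.ofAdd ((z : ℤ) : ZMod m)) = (ZMa m n r) ^ z := by
  unfold f1
  rw [AddMonoidHom.toMultiplicativeLeft_apply_apply]
  show Additive.toMul (ZMod.lift m _ ((z : ℤ) : ZMod m)) = _
  rw [ZMod.lift_coe]
  rfl

lemma f2_coe (z : ℤ) :
    f2 m n r (Multiplicative.ofAdd ((z : ℤ) : ZMod n)) = (ZMb m n r) ^ z := by
  unfold f2
  rw [AddMonoidHom.toMultiplicativeLeft_apply_apply]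
  show Additive.toMul (ZMod.lift n _ ((z : ℤ) : ZMod n)) = _
  rw [ZMod.lift_coe]
  rfl

lemma zmod_int_cast_val {k : ℕ} [NeZero k] (x : ZMod k) : (((x.val : ℕ) : ℤ) : ZMod k) = x := by
  rw [Int.cast_natCast, ZMod.natCast_val, ZMod.cast_id]

lemma f1_ofAdd (x : ZMod m) :
    f1 m n r (Multiplicative.ofAdd x) = (ZMa m n r) ^ ((x.val : ℕ) : ℤ) := by
  conv_lhs => rw [← zmod_int_cast_val x]
  exact f1_coe m n r _

lemma f2_ofAdd (x : ZMod n) :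
    f2 m n r (Multiplicative.ofAdd x) = (ZMb m n r) ^ ((x.val : ℕ) : ℤ) := by
  conv_lhs => rw [← zmod_int_cast_val x]
  exact f2_coe m n r _

lemma f1_one : f1 m n r (Multiplicative.ofAdd (1 : ZMod m)) = ZMa m n r := by
  have h1 : (1 : ZMod m) = ((1 : ℤ) : ZMod m) := by push_cast; rfl
  rw [h1, f1_coe, zpow_one]

lemma f2_one : f2 m n r (Multiplicative.ofAdd (1 : ZMod n)) = ZMb m n r := by
  have h1 : (1 : ZMod n) = ((1 : ℤ) : ZMod n) := by push_cast; rfl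
  rw [h1, f2_coe, zpow_one]

lemma hcomp : ∀ g : Multiplicative (ZMod n),
    (f1 m n r).comp ((phiH m n (cU m n r hn hr) (cU_pow_n m n r hn hr) g).toMonoidHom)
      = (MulAut.conj (f2 m n r g)).toMonoidHom.comp (f1 m n r) := by
  intro g
  apply multZModExt
  set k : ℕ := g.toAdd.val with hk
  have hg : g = Multiplicative.ofAdd (g.toAdd) := rfl
  -- LHS
  have hL : (f1 m n r) (phiH m n (cU m n r hn hr) (cU_pow_n m n r hn hr) g
        (Multiplicative.ofAdd (1 : ZMod m)))
      = (ZMa m n r) ^ ((r : ℤ) ^ ((n - 1) * k)) := by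
    rw [phiH_apply, mul_one]
    conv_lhs =>
      rw [hg, chi_cU_coe m n r hn hr, ← hk]
    rw [show ((r ^ ((n-1) * k) : ℤ) : ZMod m) = (((r ^ ((n-1)*k) : ℤ) : ℤ) : ZMod m) from rfl]
    rw [f1_coe]
  -- RHS
  have hR : (MulAut.conj (f2 m n r g)) ((f1 m n r) (Multiplicative.ofAdd (1 : ZMod m)))
      = (ZMa m n r) ^ ((r : ℤ) ^ ((n - 1) * k)) := by
    rw [f1_one, hg, f2_ofAdd, ← hk, MulAut.conj_apply]
    -- b^k * a * b^-k
    have hb : (ZMb m n r) ^ ((k : ℕ) : ℤ) = (ZMb m n r)⁻¹ ^ ((n-1) * k : ℕ) := by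
      rw [inv_pow, ← zpow_natCast ((ZMb m n r)) (((n-1) * k : ℕ)), ← zpow_neg]
      apply zpow_congr_of_pow_eq_one (bZ_pow m n r)
      push_cast
      refine ⟨k, ?_⟩
      rw [Nat.cast_sub hn]
      ring
    rw [hb]
    have := conjZM_pow m n r ((n-1) * k)
    rw [MulAut.conj_apply] at this
    rw [this]
  rw [MonoidHom.comp_apply, MonoidHom.comp_apply]
  rw [MulEquiv.coe_toMonoidHom, MulEquiv.coe_toMonoidHom]
  rw [hL, hR]

def psiHom : GG →* ZM m n r :=
  SemidirectProduct.lift (f1 m n r) (f2 m n r) (hcomp m n r hn hr)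

lemma psi_pi : ∀ x : ZM m n r, psiHom m n r hn hr (piHom m n r hn hr x) = x := by
  have : (psiHom m n r hn hr).comp (piHom m n r hn hr) = MonoidHom.id _ := by
    apply PresentedGroup.ext
    intro x
    cases x
    · show psiHom m n r hn hr (piHom m n r hn hr (ZMb m n r)) = ZMb m n r
      rw [piHom_b, psiHom, lift_inr, f2_one]
    · show psiHom m n r hn hr (piHom m n r hn hr (ZMa m n r)) = ZMa m n r
      rw [piHom_a, psiHom, lift_inl, f1_one]
  intro x
  exact DFunLike.congr_fun this x

lemma pi_bijective : Function.Bijective (piHom m n r hn hr) := by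
  constructor
  · intro x y h
    have := congrArg (psiHom m n r hn hr) h
    rwa [psi_pi, psi_pi] at this
  · intro x
    have hinl : ∀ y : Multiplicative (ZMod m), ∃ z, piHom m n r hn hr z = inl y := by
      intro y
      refine ⟨(ZMa m n r) ^ (y.toAdd.val), ?_⟩
      rw [map_pow, piHom_a, ← map_pow, ofAdd_one_pow_val]
      rfl
    have hinr : ∀ y : Multiplicative (ZMod n), ∃ z, piHom m n r hn hr z = inr y := by
      intro y
      refine ⟨(ZMb m n r) ^ (y.toAdd.val), ?_⟩
      rw [map_pow, piHom_b, ← map_pow, ofAdd_one_pow_val]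
      rfl
    obtain ⟨z1, hz1⟩ := hinl x.left
    obtain ⟨z2, hz2⟩ := hinr x.right
    refine ⟨z1 * z2, ?_⟩
    rw [map_mul, hz1, hz2, inl_left_mul_inr_right]

noncomputable def eIso : ZM m n r ≃* GG :=
  MulEquiv.ofBijective (piHom m n r hn hr) (pi_bijective m n r hn hr)
end Part7

theorem stmt16 (p q u v : ℕ) (hp : p.Prime) (hq : q.Prime)
    (hu : 0 < u) (hv : 0 < v) (m n : ℕ) (r : ℤ) (hm : m = p ^ u) (hn : n = q ^ v)
    (hco : Nat.Coprime m n) (hco2 : IsCoprime (m : ℤ) (r - 1))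
    (hr : (m : ℤ) ∣ r ^ n - 1)
    (hg : ∀ k : ℕ, 1 ≤ k → k < n → Int.gcd (m : ℤ) (r ^ k - 1) = 1) :
    (∀ H K : Subgroup (ZM m n r), H.Normal → K.Normal → H ≤ K ∨ K ≤ H) ∧
    Nat.card {H : Subgroup (ZM m n r) // H.Normal} = u + v + 1 := by
  subst hm hn
  haveI : NeZero (p ^ u) := ⟨pow_ne_zero _ hp.pos.ne'⟩
  haveI : NeZero (q ^ v) := ⟨pow_ne_zero _ hq.pos.ne'⟩
  have hn0 : 0 < q ^ v := Nat.pos_of_ne_zero (NeZero.ne _)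
  set e := eIso (p ^ u) (q ^ v) r hn0 hr with he
  have hunit := chi_unit_sub_one (p ^ u) (q ^ v) r hn0 hr hg
  have hmapmap : ∀ H : Subgroup (ZM (p ^ u) (q ^ v) r),
      Subgroup.map e.symm.toMonoidHom (Subgroup.map e.toMonoidHom H) = H := by
    intro H
    rw [Subgroup.map_map,
      show e.symm.toMonoidHom.comp e.toMonoidHom = MonoidHom.id _ from
        MonoidHom.ext fun x => e.symm_apply_apply x, Subgroup.map_id]
  have hmapmap2 : ∀ H : Subgroup (Gd (p ^ u) (q ^ v) (cU (p ^ u) (q ^ v) r hn0 hr)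
        (cU_pow_n (p ^ u) (q ^ v) r hn0 hr)),
      Subgroup.map e.toMonoidHom (Subgroup.map e.symm.toMonoidHom H) = H := by
    intro H
    rw [Subgroup.map_map,
      show e.toMonoidHom.comp e.symm.toMonoidHom = MonoidHom.id _ from
        MonoidHom.ext fun x => e.apply_symm_apply x, Subgroup.map_id]
  constructor
  · intro H K hH hK
    have hH' : (Subgroup.map e.toMonoidHom H).Normal := hH.map _ (EquivLike.surjective e)
    have hK' : (Subgroup.map e.toMonoidHom K).Normal := hK.map _ (EquivLike.surjective e)
    rcases chain_normal (p ^ u) (q ^ v) _ _ hunit (zmod_chain hp) (zmod_chain hq)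
      _ _ hH' hK' with h | h
    · left
      exact (Subgroup.map_le_map_iff_of_injective (f := e.toMonoidHom)
        (EquivLike.injective e)).1 h
    · right
      exact (Subgroup.map_le_map_iff_of_injective (f := e.toMonoidHom)
        (EquivLike.injective e)).1 h
  · have hEquiv : {H : Subgroup (ZM (p ^ u) (q ^ v) r) // H.Normal}
        ≃ {H : Subgroup (Gd (p ^ u) (q ^ v) (cU (p ^ u) (q ^ v) r hn0 hr)
            (cU_pow_n (p ^ u) (q ^ v) r hn0 hr)) // H.Normal} := by
      refine ⟨fun H => ⟨Subgroup.map e.toMonoidHom H.1, H.2.map _ (EquivLike.surjective e)⟩,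
        fun H => ⟨Subgroup.map e.symm.toMonoidHom H.1, H.2.map _ (EquivLike.surjective e.symm)⟩,
        ?_, ?_⟩
      · intro H
        exact Subtype.ext (hmapmap H.1)
      · intro H
        exact Subtype.ext (hmapmap2 H.1)
    rw [Nat.card_congr hEquiv, card_normal _ _ _ _ hunit,
      card_addSubgroup_zmod hp, card_addSubgroup_zmod hq]
    omega
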